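/- Let A be a nonnegative compact linear operator on L²(X) with A^r = A (r ≥ 2), whose kernel contains no nonzero nonnegative function, and suppose R(A) has a basis e₁, …, e_N of nonnegative functions with pairwise essentially disjoint supports, where N > r − 1. Then A is decomposable: there exists a Borel set U ⊆ X with μ(U)·μ(Uᶜ) > 0 such that ⟨A χ_U, χ_{Uᶜ}⟩ = 0. -/

import Mathlib

open MeasureTheory

section MatrixAux

lemma mat_mul_nonneg {n : ℕ} {M B : Matrix (Fin n) (Fin n) ℝ}
    (hM : ∀ i j, 0 ≤ M i j) (hB : ∀ i j, 0 ≤ B i j) : ∀ i j, 0 ≤ (M * B) i j := by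
  intro i j
  rw [Matrix.mul_apply]
  exact Finset.sum_nonneg fun k _ => mul_nonneg (hM i k) (hB k j)

lemma mat_pow_nonneg {n : ℕ} {M : Matrix (Fin n) (Fin n) ℝ}
    (hM : ∀ i j, 0 ≤ M i j) : ∀ m, ∀ i j, 0 ≤ (M ^ m) i j := by
  intro m
  induction m with
  | zero => intro i j; simp [Matrix.one_apply]; positivity
  | succ m ih => rw [pow_succ]; exact mat_mul_nonneg ih hM

lemma col_unique {n : ℕ} {M B : Matrix (Fin n) (Fin n) ℝ}
    (hM : ∀ i j, 0 ≤ M i j) (hB : ∀ i j, 0 ≤ B i j)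
    (hMB : M * B = 1) (hBM : B * M = 1) :
    ∀ i a b, M a i ≠ 0 → M b i ≠ 0 → a = b := by
  intro i a b ha hb
  by_contra hab
  have hcol : ∀ c : Fin n, M c i ≠ 0 → ∀ j, j ≠ i → B j c = 0 := by
    intro c hc j hj
    have h0 : (B * M) j i = 0 := by rw [hBM, Matrix.one_apply_ne hj]
    rw [Matrix.mul_apply] at h0
    have := (Finset.sum_eq_zero_iff_of_nonneg (fun k _ => mul_nonneg (hB j k) (hM k i))).1 h0
      c (Finset.mem_univ c)
    rcases mul_eq_zero.1 this with h | h
    · exact h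
    · exact absurd h hc
  have hBia : B i a ≠ 0 := by
    intro h0
    have : (M * B) a a = 0 := by
      rw [Matrix.mul_apply]
      apply Finset.sum_eq_zero
      intro k _
      by_cases hk : k = i
      · subst hk; rw [h0, mul_zero]
      · rw [hcol a ha k hk, mul_zero]
    rw [hMB, Matrix.one_apply_eq] at this; norm_num at this
  set c := B i b / B i a with hc
  have hcols : ∀ s, B s b = c * B s a := by
    intro s
    by_cases hs : s = i
    · subst hs; rw [hc, div_mul_cancel₀ _ hBia]
    · rw [hcol b hb s hs, hcol a ha s hs, mul_zero]
  have h1 : (M * B) b b = c * (M * B) b a := by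
    rw [Matrix.mul_apply, Matrix.mul_apply, Finset.mul_sum]
    apply Finset.sum_congr rfl
    intro k _
    rw [hcols k]; ring
  rw [hMB] at h1
  simp [Matrix.one_apply_ne (Ne.symm hab)] at h1

lemma monomial_perm {n m : ℕ} (hm : 1 ≤ m) {M : Matrix (Fin n) (Fin n) ℝ}
    (hM : ∀ i j, 0 ≤ M i j) (hpow : M ^ m = 1) :
    ∃ f : Fin n → Fin n, (∀ j k, M k j ≠ 0 → k = f j) ∧ (∀ j, f^[m] j = j) := by
  set B := M ^ (m - 1) with hB
  have hMB : M * B = 1 := by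
    rw [hB, ← pow_succ']
    rwa [Nat.sub_add_cancel hm]
  have hBM : B * M = 1 := by
    rw [hB, ← pow_succ]
    rwa [Nat.sub_add_cancel hm]
  have hBn : ∀ i j, 0 ≤ B i j := mat_pow_nonneg hM _
  have huniq := col_unique hM hBn hMB hBM
  have hex : ∀ j, ∃ k, M k j ≠ 0 := by
    intro j
    by_contra h
    push_neg at h
    have : (B * M) j j = 0 := by
      rw [Matrix.mul_apply]
      exact Finset.sum_eq_zero fun s _ => by rw [h s, mul_zero]
    rw [hBM, Matrix.one_apply_eq] at this; norm_num at this
  choose f hf using hex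
  refine ⟨f, fun j k hk => huniq j k (f j) hk (hf j), ?_⟩
  have key : ∀ q j, ((M ^ q) (f^[q] j) j ≠ 0) ∧ (∀ k, (M ^ q) k j ≠ 0 → k = f^[q] j) := by
    intro q
    induction q with
    | zero =>
      intro j
      simp only [Function.iterate_zero, id_eq, pow_zero]
      constructor
      · rw [Matrix.one_apply_eq]; norm_num
      · intro k hk
        by_contra hne
        rw [Matrix.one_apply_ne hne] at hk; exact hk rfl
    | succ q ih =>
      intro j
      have hiter : f^[q + 1] j = f (f^[q] j) := Function.iterate_succ_apply' f q j
      constructor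
      · rw [pow_succ', hiter]
        rw [Matrix.mul_apply]
        intro h0
        have := (Finset.sum_eq_zero_iff_of_nonneg
          (fun s _ => mul_nonneg (hM _ s) (mat_pow_nonneg hM q s j))).1 h0
          (f^[q] j) (Finset.mem_univ _)
        rcases mul_eq_zero.1 this with h | h
        · exact (hf (f^[q] j)) h
        · exact (ih j).1 h
      · intro k hk
        rw [pow_succ', Matrix.mul_apply] at hk
        obtain ⟨s, -, hs⟩ := Finset.exists_ne_zero_of_sum_ne_zero hk
        have hs1 : M k s ≠ 0 := fun h => hs (by rw [h, zero_mul])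
        have hs2 : (M ^ q) s j ≠ 0 := fun h => hs (by rw [h, mul_zero])
        rw [hiter, ← (ih j).2 s hs2]
        exact huniq s k (f s) hs1 (hf s)
  intro j
  have h1 := (key m j).1
  rw [hpow] at h1
  by_contra hne
  rw [Matrix.one_apply_ne hne] at h1; exact h1 rfl

end MatrixAux

section LpAux

variable {X : Type*} [MeasurableSpace X] {μ : Measure X}

lemma lp_coeFn_sum {ι : Type*} (s : Finset ι) (v : ι → Lp ℝ 2 μ) :
    ⇑(∑ i ∈ s, v i) =ᵐ[μ] fun x => ∑ i ∈ s, v i x := by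
  classical
  induction s using Finset.induction_on with
  | empty => simp only [Finset.sum_empty]; exact Lp.coeFn_zero ℝ 2 μ
  | insert a s hnotmem ih =>
    rw [Finset.sum_insert hnotmem]
    filter_upwards [Lp.coeFn_add (v a) (∑ i ∈ s, v i), ih] with x hx hx2
    rw [hx]
    simp only [Pi.add_apply, hx2, Finset.sum_insert hnotmem]

end LpAux

set_option maxHeartbeats 1000000 in
set_option synthInstance.maxHeartbeats 400000 in
theorem stmt16 {X : Type*} [MeasurableSpace X] (μ : Measure X) [IsFiniteMeasure μ]
    (A : Lp ℝ 2 μ →L[ℝ] Lp ℝ 2 μ) (hcompact : IsCompactOperator A)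
    (hpos : ∀ f : Lp ℝ 2 μ, 0 ≤ f → 0 ≤ A f)
    (r : ℕ) (hr : 2 ≤ r) (hpot : A ^ r = A)
    (hker : ∀ h : Lp ℝ 2 μ, A h = 0 → 0 ≤ h → h = 0)
    (N : ℕ) (e : Fin N → Lp ℝ 2 μ)
    (hmem : ∀ i, e i ∈ Set.range A)
    (he0 : ∀ i, 0 ≤ e i) (hne : ∀ i, e i ≠ 0)
    (hdisj : ∀ i j, i ≠ j →
      μ (Function.support (e i : X → ℝ) ∩ Function.support (e j : X → ℝ)) = 0)
    (hli : LinearIndependent ℝ e)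
    (hspan : Submodule.span ℝ (Set.range e) =
      LinearMap.range (A : Lp ℝ 2 μ →ₗ[ℝ] Lp ℝ 2 μ))
    (hN : r - 1 < N) :
    ∃ U : Set X, ∃ hU : MeasurableSet U, 0 < μ U ∧ 0 < μ Uᶜ ∧
      (inner ℝ (A (indicatorConstLp 2 hU (measure_ne_top μ U) (1 : ℝ)))
        (indicatorConstLp 2 hU.compl (measure_ne_top μ Uᶜ) (1 : ℝ)) : ℝ) = 0 := by
  classical
  -- measurable nonnegative representatives
  set g : Fin N → X → ℝ := fun i x => max ((Lp.aestronglyMeasurable (e i)).mk _ x) 0 with hgdef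
  have hgmeas : ∀ i, Measurable (g i) := fun i =>
    ((Lp.aestronglyMeasurable (e i)).stronglyMeasurable_mk.measurable).max measurable_const
  have hg0 : ∀ i x, 0 ≤ g i x := fun i x => le_max_right _ _
  have heg : ∀ i, (⇑(e i) : X → ℝ) =ᵐ[μ] g i := by
    intro i
    filter_upwards [(Lp.aestronglyMeasurable (e i)).ae_eq_mk,
      (Lp.coeFn_nonneg (e i)).2 (he0 i)] with x hx hx0
    simp only [Pi.zero_apply] at hx0
    rw [hgdef]
    simp only [← hx]
    exact (sup_eq_left.2 hx0).symm
  set S : Fin N → Set X := fun i => Function.support (g i) with hSdef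
  have hSmeas : ∀ i, MeasurableSet (S i) := fun i => measurableSet_support (hgmeas i)
  have hSpos : ∀ i, 0 < μ (S i) := by
    intro i
    rcases eq_or_lt_of_le (zero_le : 0 ≤ μ (S i)) with h | h
    · exfalso
      apply hne i
      apply Lp.ext (f := e i) (g := 0)
      have hgz : ∀ᵐ x ∂μ, g i x = 0 := by
        rw [ae_iff]
        have hset : {x | ¬ g i x = 0} = S i := by
          ext x; simp [hSdef, Function.mem_support]
        rw [hset]; exact h.symm
      refine Filter.EventuallyEq.trans ?_ (Lp.coeFn_zero ℝ 2 μ).symm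
      filter_upwards [heg i, hgz] with x hx1 hx2
      simp [hx1, hx2]
    · exact h
  have hSdisj : ∀ i j, i ≠ j → μ (S i ∩ S j) = 0 := by
    intro i j hij
    have hbad1 := ae_iff.1 (heg i)
    have hbad2 := ae_iff.1 (heg j)
    have hsub : S i ∩ S j ⊆ (Function.support (⇑(e i)) ∩ Function.support (⇑(e j))) ∪
        ({x | ¬ ⇑(e i) x = g i x} ∪ {x | ¬ ⇑(e j) x = g j x}) := by
      rintro x ⟨hxi, hxj⟩
      by_cases h1 : ⇑(e i) x = g i x
      · by_cases h2 : ⇑(e j) x = g j x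
        · exact Or.inl ⟨by rw [Function.mem_support, h1]; exact hxi,
            by rw [Function.mem_support, h2]; exact hxj⟩
        · exact Or.inr (Or.inr h2)
      · exact Or.inr (Or.inl h1)
    refine le_antisymm ?_ zero_le
    calc μ (S i ∩ S j) ≤ μ ((Function.support (⇑(e i)) ∩ Function.support (⇑(e j))) ∪
          ({x | ¬ ⇑(e i) x = g i x} ∪ {x | ¬ ⇑(e j) x = g j x})) := measure_mono hsub
      _ ≤ μ (Function.support (⇑(e i)) ∩ Function.support (⇑(e j))) +
          μ ({x | ¬ ⇑(e i) x = g i x} ∪ {x | ¬ ⇑(e j) x = g j x}) := measure_union_le _ _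
      _ ≤ μ (Function.support (⇑(e i)) ∩ Function.support (⇑(e j))) +
          (μ {x | ¬ ⇑(e i) x = g i x} + μ {x | ¬ ⇑(e j) x = g j x}) := by
            gcongr; exact measure_union_le _ _
      _ = 0 := by rw [hdisj i j hij, hbad1, hbad2]; simp
  -- the coefficient matrix
  have hrep : ∀ j, ∃ c : Fin N → ℝ, ∑ i, c i • e i = A (e j) := by
    intro j
    rw [← Submodule.mem_span_range_iff_exists_fun ℝ, hspan]
    exact ⟨e j, rfl⟩
  choose cM hcM using hrep
  set M : Matrix (Fin N) (Fin N) ℝ := Matrix.of (fun i j => cM j i) with hMdef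
  have hMrep : ∀ j, ∑ i, M i j • e i = A (e j) := fun j => hcM j
  have huniq : ∀ c d : Fin N → ℝ, (∑ i, c i • e i = ∑ i, d i • e i) → c = d := by
    intro c d h
    have h0 : ∑ i, (c i - d i) • e i = 0 := by
      simp only [sub_smul, Finset.sum_sub_distrib, h, sub_self]
    funext i
    have := Fintype.linearIndependent_iff.1 hli (fun i => c i - d i) h0 i
    linarith [this]
  have hApow : ∀ (q : ℕ) j, (A ^ q) (e j) = ∑ i, (M ^ q) i j • e i := by
    intro q
    induction q with
    | zero =>
      intro j
      rw [pow_zero, pow_zero, ContinuousLinearMap.one_apply]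
      rw [Finset.sum_eq_single j (fun b _ hb => by rw [Matrix.one_apply_ne hb, zero_smul])
        (fun h => absurd (Finset.mem_univ j) h)]
      rw [Matrix.one_apply_eq, one_smul]
    | succ q ih =>
      intro j
      rw [pow_succ', ContinuousLinearMap.mul_apply, ih j, map_sum]
      simp_rw [_root_.map_smul, ← hMrep, Finset.smul_sum, smul_smul]
      rw [Finset.sum_comm]
      rw [pow_succ']
      apply Finset.sum_congr rfl
      intro k _
      rw [← Finset.sum_smul, Matrix.mul_apply]
      congr 1
      apply Finset.sum_congr rfl
      intro i _
      ring
  have hM1 : M ^ (r - 1) = 1 := by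
    have hcol : ∀ j, (fun i => (M ^ (r - 1)) i j) = fun i => (1 : Matrix (Fin N) (Fin N) ℝ) i j := by
      intro j
      apply huniq
      rw [← hApow (r - 1) j]
      obtain ⟨y, hy⟩ := hmem j
      have h1 : (A ^ (r - 1)) (e j) = e j := by
        rw [← hy, ← ContinuousLinearMap.mul_apply, ← pow_succ, Nat.sub_add_cancel (by omega), hpot]
      rw [h1]
      rw [Finset.sum_eq_single j (fun b _ hb => by rw [Matrix.one_apply_ne hb, zero_smul])
        (fun h => absurd (Finset.mem_univ j) h)]
      rw [Matrix.one_apply_eq, one_smul]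
    ext i j
    exact congrFun (hcol j) i
  -- nonnegativity of M
  have hMnonneg : ∀ k j, 0 ≤ M k j := by
    intro k j
    have hF0 : (0 : X → ℝ) ≤ᵐ[μ] ⇑(A (e j)) := (Lp.coeFn_nonneg _).2 (hpos _ (he0 j))
    have hFrep : ⇑(A (e j)) =ᵐ[μ] fun x => ∑ i, M i j * g i x := by
      rw [← hMrep j]
      have h1 := lp_coeFn_sum Finset.univ (fun i => M i j • e i)
      have h2 : ∀ᵐ x ∂μ, ∀ i : Fin N, (M i j • e i : Lp ℝ 2 μ) x = M i j * g i x := by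
        rw [ae_all_iff]
        intro i
        filter_upwards [Lp.coeFn_smul (M i j) (e i), heg i] with x hx1 hx2
        rw [hx1]; simp [hx2]
      filter_upwards [h1, h2] with x hx1 hx2
      rw [hx1]
      exact Finset.sum_congr rfl fun i _ => hx2 i
    have hae : ∀ᵐ x ∂μ, (0 ≤ ⇑(A (e j)) x ∧ ⇑(A (e j)) x = ∑ i, M i j * g i x ∧
        ∀ i, i ≠ k → x ∈ S k → g i x = 0) := by
      have h3 : ∀ᵐ x ∂μ, ∀ i, i ≠ k → ¬ (x ∈ S k ∧ x ∈ S i) := by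
        rw [ae_all_iff]
        intro i
        by_cases hik : i = k
        · simp [hik]
        · rw [ae_iff]
          refine le_antisymm (le_trans (measure_mono ?_) (hSdisj k i (Ne.symm hik)).le) zero_le
          intro x hx
          simp only [Set.mem_setOf_eq] at hx
          push_neg at hx
          exact hx.2
      filter_upwards [hF0, hFrep, h3] with x hx1 hx2 hx3
      refine ⟨hx1, hx2, fun i hik hxk => ?_⟩
      by_contra hgi
      exact hx3 i hik ⟨hxk, hgi⟩
    have hpos_set : 0 < μ (S k \ {x | ¬ (0 ≤ ⇑(A (e j)) x ∧ ⇑(A (e j)) x = ∑ i, M i j * g i x ∧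
        ∀ i, i ≠ k → x ∈ S k → g i x = 0)}) := by
      rw [measure_diff_null (ae_iff.1 hae)]
      exact hSpos k
    obtain ⟨x, hxS, hxG⟩ := nonempty_of_measure_ne_zero hpos_set.ne'
    simp only [Set.mem_setOf_eq, not_not] at hxG
    obtain ⟨h1, h2, h3⟩ := hxG
    have hsum : ∑ i, M i j * g i x = M k j * g k x := by
      apply Finset.sum_eq_single k
      · intro b _ hb
        rw [h3 b hb hxS, mul_zero]
      · intro h; exact absurd (Finset.mem_univ k) h
    rw [hsum] at h2
    have hgk : 0 < g k x := lt_of_le_of_ne (hg0 k x) (Ne.symm hxS)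
    nlinarith [h2 ▸ h1]
  -- the permutation-like map and the invariant index set
  obtain ⟨f, hfuni, hfiter⟩ := monomial_perm (m := r - 1) (by omega) hMnonneg hM1
  have hN0 : 0 < N := by omega
  set i0 : Fin N := ⟨0, hN0⟩ with hi0def
  set O : Finset (Fin N) := (Finset.range (r - 1)).image (fun k => f^[k] i0) with hOdef
  have hi0O : i0 ∈ O := Finset.mem_image.2 ⟨0, Finset.mem_range.2 (by omega), rfl⟩
  have hOf : ∀ k ∈ O, f k ∈ O := by
    intro k hk
    obtain ⟨t, ht, rfl⟩ := Finset.mem_image.1 hk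
    rw [Finset.mem_range] at ht
    rcases lt_or_eq_of_le (Nat.succ_le_of_lt ht) with h | h
    · exact Finset.mem_image.2 ⟨t+1, Finset.mem_range.2 h,
        Function.iterate_succ_apply' f t i0⟩
    · have heq : f (f^[t] i0) = i0 := by
        rw [← Function.iterate_succ_apply' f t i0, h, hfiter i0]
      rw [heq]; exact hi0O
  obtain ⟨j0, hj0O⟩ : ∃ j0, j0 ∉ O := by
    by_contra h
    push_neg at h
    have huniv : O = Finset.univ := Finset.eq_univ_iff_forall.2 h
    have hcard := Finset.card_image_le (f := fun k => f^[k] i0) (s := Finset.range (r-1))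
    rw [← hOdef, huniv, Finset.card_univ, Fintype.card_fin, Finset.card_range] at hcard
    omega
  set U : Set X := ⋃ k ∈ O, S k with hUdef
  have hUmeas : MeasurableSet U :=
    MeasurableSet.biUnion (O : Set (Fin N)).to_countable (fun k _ => hSmeas k)
  have hSsubU : ∀ k ∈ O, S k ⊆ U := fun k hk => Set.subset_biUnion_of_mem hk
  have hμU : 0 < μ U := lt_of_lt_of_le (hSpos i0) (measure_mono (hSsubU i0 hi0O))
  have hμUc : 0 < μ Uᶜ := by
    have h1 : μ (S j0 ∩ U) = 0 := by
      have hsub : S j0 ∩ U ⊆ ⋃ k ∈ O, (S j0 ∩ S k) := by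
        rintro x ⟨h1, h2⟩
        rw [Set.mem_iUnion₂] at h2 ⊢
        obtain ⟨k, hk, hx⟩ := h2
        exact ⟨k, hk, h1, hx⟩
      refine le_antisymm (le_trans (measure_mono hsub) ?_) zero_le
      refine le_trans (measure_biUnion_finset_le O _) (le_of_eq ?_)
      exact Finset.sum_eq_zero fun k hk => hSdisj j0 k (fun hjk => hj0O (hjk ▸ hk))
    have h2 : 0 < μ (S j0 \ U) := by
      by_contra h
      push_neg at h
      have h3 : μ (S j0 \ U) = 0 := le_antisymm h zero_le
      have h4 : μ (S j0) = 0 := by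
        refine le_antisymm ?_ zero_le
        calc μ (S j0) = μ (S j0 ∩ U ∪ S j0 \ U) := by rw [Set.inter_union_diff]
          _ ≤ μ (S j0 ∩ U) + μ (S j0 \ U) := measure_union_le _ _
          _ = 0 := by rw [h1, h3]; simp
      exact absurd h4 (hSpos j0).ne'
    exact lt_of_lt_of_le h2 (measure_mono (fun x hx hxU => hx.2 hxU))
  refine ⟨U, hUmeas, hμU, hμUc, ?_⟩
  set χc : Lp ℝ 2 μ := indicatorConstLp 2 hUmeas.compl (measure_ne_top μ Uᶜ) (1:ℝ) with hχcdef
  have hχc0 : (0 : X → ℝ) ≤ᵐ[μ] ⇑χc := by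
    filter_upwards [indicatorConstLp_coeFn (p := 2) (hs := hUmeas.compl)
      (hμs := measure_ne_top μ Uᶜ) (c := (1:ℝ))] with x hx
    rw [hx]
    simp only [Pi.zero_apply]
    exact Set.indicator_apply_nonneg (fun _ => zero_le_one)
  have ip_mono : ∀ u v : Lp ℝ 2 μ, u ≤ v → (inner ℝ u χc : ℝ) ≤ inner ℝ v χc := by
    intro u v huv
    rw [L2.inner_def, L2.inner_def]
    refine integral_mono_ae (L2.integrable_inner (𝕜 := ℝ) u χc)
      (L2.integrable_inner (𝕜 := ℝ) v χc) ?_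
    filter_upwards [(Lp.coeFn_le u v).2 huv, hχc0] with x h1 h2
    simp only [RCLike.inner_apply, conj_trivial]
    simp only [Pi.zero_apply] at h2
    exact mul_le_mul_of_nonneg_left h1 h2
  have hAmono : ∀ u v : Lp ℝ 2 μ, u ≤ v → A u ≤ A v := by
    intro u v huv
    have h := hpos (v - u) (by rwa [sub_nonneg])
    rw [map_sub] at h
    rwa [← sub_nonneg]
  have ip_zero_nonneg : ∀ v : Lp ℝ 2 μ, 0 ≤ v → 0 ≤ (inner ℝ v χc : ℝ) := by
    intro v hv
    have h := ip_mono 0 v hv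
    rwa [inner_zero_left] at h
  have ip_e_zero : ∀ t, t ∈ O → (inner ℝ (e t) χc : ℝ) = 0 := by
    intro t ht
    rw [real_inner_comm, hχcdef,
      L2.inner_indicatorConstLp_one hUmeas.compl (measure_ne_top μ Uᶜ) (e t)]
    rw [setIntegral_congr_ae hUmeas.compl ((heg t).mono fun x hx _ => hx)]
    have hz : ∀ x ∈ Uᶜ, g t x = 0 := by
      intro x hx
      by_contra h
      exact hx (hSsubU t ht h)
    calc ∫ x in Uᶜ, g t x ∂μ = ∫ _ in Uᶜ, (0:ℝ) ∂μ := setIntegral_congr_fun hUmeas.compl hz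
      _ = 0 := by simp
  -- the key claim: for k ∈ O, ⟨A χ_{S k}, χ_{Uᶜ}⟩ = 0
  have key : ∀ k ∈ O,
      (inner ℝ (A (indicatorConstLp 2 (hSmeas k) (measure_ne_top μ (S k)) (1:ℝ))) χc : ℝ) = 0 := by
    intro k hk
    set t : ℕ → Set X := fun n => {x | 1 / ((n:ℝ) + 1) < g k x} with htdef
    have htmeas : ∀ n, MeasurableSet (t n) := fun n =>
      measurableSet_lt measurable_const (hgmeas k)
    have htsub : ∀ n, t n ⊆ S k := by
      intro n x hx
      have hlt : (0:ℝ) < g k x := lt_of_le_of_lt (by positivity) hx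
      exact hlt.ne'
    have hle : ∀ n, indicatorConstLp 2 (htmeas n) (measure_ne_top μ (t n)) (1:ℝ) ≤
        ((n:ℝ)+1) • e k := by
      intro n
      rw [← Lp.coeFn_le]
      filter_upwards [indicatorConstLp_coeFn (p := 2) (hs := htmeas n)
        (hμs := measure_ne_top μ (t n)) (c := (1:ℝ)),
        Lp.coeFn_smul ((n:ℝ)+1) (e k), heg k] with x h1 h2 h3
      rw [h1, h2]
      simp only [Pi.smul_apply, smul_eq_mul, h3]
      by_cases hx : x ∈ t n
      · rw [Set.indicator_of_mem hx]
        have hlt : 1/((n:ℝ)+1) < g k x := hx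
        rw [div_lt_iff₀ (by positivity)] at hlt
        nlinarith [hg0 k x]
      · rw [Set.indicator_of_notMem hx]
        exact mul_nonneg (by positivity) (hg0 k x)
    have hAek : A (e k) = M (f k) k • e (f k) := by
      rw [← hMrep k]
      rw [Finset.sum_eq_single (f k)]
      · intro b _ hb
        have hMb : M b k = 0 := by
          by_contra h
          exact hb (hfuni k b h)
        rw [hMb, zero_smul]
      · intro h; exact absurd (Finset.mem_univ _) h
    have hχt0 : ∀ n, (0 : Lp ℝ 2 μ) ≤ indicatorConstLp 2 (htmeas n) (measure_ne_top μ (t n)) (1:ℝ) := by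
      intro n
      rw [← Lp.coeFn_nonneg]
      filter_upwards [indicatorConstLp_coeFn (p := 2) (hs := htmeas n)
        (hμs := measure_ne_top μ (t n)) (c := (1:ℝ))] with x hx
      rw [hx]
      simp only [Pi.zero_apply]
      exact Set.indicator_apply_nonneg (fun _ => zero_le_one)
    have hstep : ∀ n,
        (inner ℝ (A (indicatorConstLp 2 (htmeas n) (measure_ne_top μ (t n)) (1:ℝ))) χc : ℝ) = 0 := by
      intro n
      refine le_antisymm ?_ (ip_zero_nonneg _ (hpos _ (hχt0 n)))
      have h1 := ip_mono _ _ (hAmono _ _ (hle n))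
      rw [_root_.map_smul, hAek, real_inner_smul_left, real_inner_smul_left,
        ip_e_zero (f k) (hOf k hk), mul_zero, mul_zero] at h1
      exact h1
    have hsplit : ∀ n, indicatorConstLp 2 (hSmeas k) (measure_ne_top μ (S k)) (1:ℝ) =
        indicatorConstLp 2 (htmeas n) (measure_ne_top μ (t n)) 1 +
        indicatorConstLp 2 ((hSmeas k).diff (htmeas n)) (measure_ne_top μ _) 1 := by
      intro n
      apply Lp.ext
      filter_upwards [indicatorConstLp_coeFn (p := 2) (hs := hSmeas k)
          (hμs := measure_ne_top μ (S k)) (c := (1:ℝ)),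
        indicatorConstLp_coeFn (p := 2) (hs := htmeas n)
          (hμs := measure_ne_top μ (t n)) (c := (1:ℝ)),
        indicatorConstLp_coeFn (p := 2) (hs := (hSmeas k).diff (htmeas n))
          (hμs := measure_ne_top μ (S k \ t n)) (c := (1:ℝ)),
        Lp.coeFn_add (indicatorConstLp 2 (htmeas n) (measure_ne_top μ (t n)) (1:ℝ))
          (indicatorConstLp 2 ((hSmeas k).diff (htmeas n)) (measure_ne_top μ _) (1:ℝ))]
        with x h1 h2 h3 h4
      rw [h1, h4, Pi.add_apply, h2, h3]
      by_cases hx1 : x ∈ t n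
      · rw [Set.indicator_of_mem hx1, Set.indicator_of_mem (htsub n hx1),
          Set.indicator_of_notMem (fun h => h.2 hx1)]
        norm_num
      · by_cases hx2 : x ∈ S k
        · rw [Set.indicator_of_mem hx2, Set.indicator_of_notMem hx1,
            Set.indicator_of_mem (show x ∈ S k \ t n from ⟨hx2, hx1⟩)]
          norm_num
        · rw [Set.indicator_of_notMem hx2, Set.indicator_of_notMem hx1,
            Set.indicator_of_notMem (fun h => hx2 h.1)]
          norm_num
    have hub : ∀ n,
        (inner ℝ (A (indicatorConstLp 2 (hSmeas k) (measure_ne_top μ (S k)) (1:ℝ))) χc : ℝ) ≤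
        ‖A‖ * ((μ (S k \ t n)).toReal ^ (1/(2:ℝ))) * ‖χc‖ := by
      intro n
      rw [hsplit n, map_add, inner_add_left, hstep n, zero_add]
      calc (inner ℝ (A (indicatorConstLp 2 ((hSmeas k).diff (htmeas n)) (measure_ne_top μ _) (1:ℝ)))
            χc : ℝ) ≤
          ‖A (indicatorConstLp 2 ((hSmeas k).diff (htmeas n)) (measure_ne_top μ _) (1:ℝ))‖ * ‖χc‖ :=
            real_inner_le_norm _ _
        _ ≤ (‖A‖ * ‖indicatorConstLp 2 ((hSmeas k).diff (htmeas n)) (measure_ne_top μ _) (1:ℝ)‖) *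
            ‖χc‖ := mul_le_mul_of_nonneg_right (A.le_opNorm _) (norm_nonneg _)
        _ = ‖A‖ * ((μ (S k \ t n)).toReal ^ (1/(2:ℝ))) * ‖χc‖ := by
            rw [norm_indicatorConstLp (by norm_num) (by norm_num)]
            norm_num [Measure.real]
    have hmono_t : Antitone (fun n => S k \ t n) := by
      intro a b hab x hx
      refine ⟨hx.1, fun h => hx.2 ?_⟩
      have h1 : 1/((b:ℝ)+1) ≤ 1/((a:ℝ)+1) := by
        apply one_div_le_one_div_of_le (by positivity)
        have : (a:ℝ) ≤ b := Nat.cast_le.2 hab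
        linarith
      exact lt_of_le_of_lt h1 h
    have hinter : ⋂ n, (S k \ t n) = (∅ : Set X) := by
      ext x
      simp only [Set.mem_iInter, Set.mem_empty_iff_false, iff_false]
      intro h
      obtain ⟨hxS, -⟩ := h 0
      have hg : 0 < g k x := lt_of_le_of_ne (hg0 k x) (Ne.symm hxS)
      obtain ⟨n, hn⟩ := exists_nat_one_div_lt hg
      exact (h n).2 hn
    have htend : Filter.Tendsto (fun n => μ (S k \ t n)) Filter.atTop (nhds 0) := by
      have h := tendsto_measure_iInter_atTop (μ := μ)
        (fun n => ((hSmeas k).diff (htmeas n)).nullMeasurableSet) hmono_t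
        ⟨0, measure_ne_top μ _⟩
      rw [hinter] at h
      simpa [Function.comp_def] using h
    have htend2 : Filter.Tendsto (fun n => ‖A‖ * ((μ (S k \ t n)).toReal ^ (1/(2:ℝ))) * ‖χc‖)
        Filter.atTop (nhds 0) := by
      have h1 : Filter.Tendsto (fun n => (μ (S k \ t n)).toReal) Filter.atTop (nhds 0) := by
        have := (ENNReal.tendsto_toReal (a := 0) (by norm_num)).comp htend
        simpa [Function.comp_def] using this
      have h2 : Filter.Tendsto (fun n => (μ (S k \ t n)).toReal ^ (1/(2:ℝ)))
          Filter.atTop (nhds 0) := by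
        have hc := (Real.continuousAt_rpow_const 0 (1/2) (Or.inr (by norm_num))).tendsto.comp h1
        simpa [Function.comp_def, Real.zero_rpow (by norm_num : (1/2 : ℝ) ≠ 0)] using hc
      have h3 := (h2.const_mul ‖A‖).mul_const ‖χc‖
      simpa using h3
    refine le_antisymm (ge_of_tendsto' htend2 hub) ?_
    refine ip_zero_nonneg _ (hpos _ ?_)
    rw [← Lp.coeFn_nonneg]
    filter_upwards [indicatorConstLp_coeFn (p := 2) (hs := hSmeas k)
      (hμs := measure_ne_top μ (S k)) (c := (1:ℝ))] with x hx
    rw [hx]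
    simp only [Pi.zero_apply]
    exact Set.indicator_apply_nonneg (fun _ => zero_le_one)
  -- conclude
  have hχU0 : (0 : Lp ℝ 2 μ) ≤ indicatorConstLp 2 hUmeas (measure_ne_top μ U) (1:ℝ) := by
    rw [← Lp.coeFn_nonneg]
    filter_upwards [indicatorConstLp_coeFn (p := 2) (hs := hUmeas)
      (hμs := measure_ne_top μ U) (c := (1:ℝ))] with x hx
    rw [hx]
    simp only [Pi.zero_apply]
    exact Set.indicator_apply_nonneg (fun _ => zero_le_one)
  have hUle : indicatorConstLp 2 hUmeas (measure_ne_top μ U) (1:ℝ) ≤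
      ∑ k ∈ O, indicatorConstLp 2 (hSmeas k) (measure_ne_top μ (S k)) (1:ℝ) := by
    rw [← Lp.coeFn_le]
    have hall : ∀ᵐ x ∂μ, ∀ k : Fin N,
        (indicatorConstLp 2 (hSmeas k) (measure_ne_top μ (S k)) (1:ℝ)) x =
        (S k).indicator (fun _ => (1:ℝ)) x := by
      rw [ae_all_iff]
      intro k
      exact indicatorConstLp_coeFn
    filter_upwards [indicatorConstLp_coeFn (p := 2) (hs := hUmeas)
        (hμs := measure_ne_top μ U) (c := (1:ℝ)),
      lp_coeFn_sum O (fun k => indicatorConstLp 2 (hSmeas k) (measure_ne_top μ (S k)) (1:ℝ)),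
      hall] with x h1 h2 h3
    rw [h1, h2]
    simp only [h3]
    by_cases hx : x ∈ U
    · rw [Set.indicator_of_mem hx]
      obtain ⟨k0, hk0, hxk0⟩ := Set.mem_iUnion₂.1 hx
      calc (1:ℝ) = (S k0).indicator (fun _ => (1:ℝ)) x := by rw [Set.indicator_of_mem hxk0]
        _ ≤ ∑ k ∈ O, (S k).indicator (fun _ => (1:ℝ)) x :=
          Finset.single_le_sum (f := fun k => (S k).indicator (fun _ => (1:ℝ)) x)
            (fun k _ => Set.indicator_apply_nonneg (fun _ => zero_le_one)) hk0
    · rw [Set.indicator_of_notMem hx]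
      exact Finset.sum_nonneg fun k _ => Set.indicator_apply_nonneg (fun _ => zero_le_one)
  have h1 := ip_mono _ _ (hAmono _ _ hUle)
  rw [map_sum, sum_inner] at h1
  rw [Finset.sum_eq_zero (fun k hk => key k hk)] at h1
  exact le_antisymm h1 (ip_zero_nonneg _ (hpos _ hχU0))
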